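/- There exists a linear isomorphism φ from M₃(ℝ) onto the space S₄⁰(ℝ) of symmetric trace-free real 4×4 matrices such that: (i) for every J ∈ M₃(ℝ) and every unit quaternion q (viewed as the vector of its four real coordinates in ℝ⁴), ½ J·Φ(q) = ⟨q, φ(J) q⟩; (ii) for every unit quaternion q, φ(Φ(q)) = q qᵀ − ¼ I₄; and (iii) J ∈ M₃(ℝ) is a diagonal matrix if and only if φ(J) is a diagonal matrix. -/

import Mathlib

open Matrix Quaternion

/-- The space of `3 × 3` real matrices. -/
abbrev Mat3 := Matrix (Fin 3) (Fin 3) ℝ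

/-- The inner product `A·B = ½ Tr(ABᵀ)` on `M₃(ℝ)`. -/
noncomputable def mdot (A B : Mat3) : ℝ := (1 / 2) * (A * Bᵀ).trace

/-- Identification of `ℝ³` with purely imaginary quaternions via the basis `(i, j, k)`. -/
def toQuat (u : Fin 3 → ℝ) : ℍ[ℝ] := ⟨0, u 0, u 1, u 2⟩

/-- The vector of imaginary parts of a quaternion. -/
def imPart (x : ℍ[ℝ]) : Fin 3 → ℝ := ![x.imI, x.imJ, x.imK]

/-- The matrix, in the basis `(i, j, k)` of purely imaginary quaternions, of the linear map
`u ↦ q u q*`. -/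
noncomputable def Phi (q : ℍ[ℝ]) : Mat3 :=
  Matrix.of fun i j => imPart (q * toQuat (fun k => if k = j then 1 else 0) * star q) i

/-- A quaternion seen as the vector of its four real coordinates in `ℝ⁴`. -/
def qv (q : ℍ[ℝ]) : Fin 4 → ℝ := ![q.re, q.imI, q.imJ, q.imK]

/-- `S₄⁰(ℝ)`: the space of symmetric trace-free real `4 × 4` matrices (`Q`-tensors). -/
def S40 : Submodule ℝ (Matrix (Fin 4) (Fin 4) ℝ) where
  carrier := {Q | Qᵀ = Q ∧ Q.trace = 0}
  add_mem' := by
    rintro a b ⟨ha1, ha2⟩ ⟨hb1, hb2⟩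
    exact ⟨by rw [Matrix.transpose_add, ha1, hb1], by rw [Matrix.trace_add, ha2, hb2, add_zero]⟩
  zero_mem' := ⟨by simp, by simp⟩
  smul_mem' := by
    rintro c a ⟨ha1, ha2⟩
    exact ⟨by rw [Matrix.transpose_smul, ha1], by rw [Matrix.trace_smul, ha2, smul_zero]⟩

/-- The explicit matrix of the linear map `φ`. -/
noncomputable def fMat (J : Mat3) : Matrix (Fin 4) (Fin 4) ℝ :=
  (1/4 : ℝ) • !![J 0 0 + J 1 1 + J 2 2, J 2 1 - J 1 2, J 0 2 - J 2 0, J 1 0 - J 0 1;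
                 J 2 1 - J 1 2, J 0 0 - J 1 1 - J 2 2, J 0 1 + J 1 0, J 0 2 + J 2 0;
                 J 0 2 - J 2 0, J 0 1 + J 1 0, J 1 1 - J 0 0 - J 2 2, J 1 2 + J 2 1;
                 J 1 0 - J 0 1, J 0 2 + J 2 0, J 1 2 + J 2 1, J 2 2 - J 0 0 - J 1 1]

/-- The explicit inverse. -/
noncomputable def gMat (M : Matrix (Fin 4) (Fin 4) ℝ) : Mat3 :=
  (2:ℝ) • !![M 0 0 + M 1 1, M 1 2 - M 0 3, M 1 3 + M 0 2;
             M 1 2 + M 0 3, M 0 0 + M 2 2, M 2 3 - M 0 1;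
             M 1 3 - M 0 2, M 2 3 + M 0 1, M 0 0 + M 3 3]

lemma fMat_mem (J : Mat3) : fMat J ∈ S40 := by
  constructor
  · ext i j; fin_cases i <;> fin_cases j <;> simp [fMat]
  · simp [fMat, Matrix.trace, Fin.sum_univ_four]; ring

lemma gMat_fMat (J : Mat3) : gMat (fMat J) = J := by
  ext i j; fin_cases i <;> fin_cases j <;> simp [fMat, gMat] <;> ring

lemma fMat_gMat (M : Matrix (Fin 4) (Fin 4) ℝ) (hsym : Mᵀ = M) (htr : M.trace = 0) :
    fMat (gMat M) = M := by
  have hs : ∀ i j : Fin 4, M j i = M i j := fun i j => (congrFun (congrFun hsym i) j : _)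
  have ht : M 0 0 + M 1 1 + M 2 2 + M 3 3 = 0 := by
    simpa [Matrix.trace, Fin.sum_univ_four] using htr
  ext i j
  fin_cases i <;> fin_cases j <;> simp [fMat, gMat] <;>
    linarith [ht, hs 0 1, hs 0 2, hs 0 3, hs 1 2, hs 1 3, hs 2 3]

lemma Phi_eq (q : ℍ[ℝ]) : Phi q =
    !![q.re^2 + q.imI^2 - q.imJ^2 - q.imK^2, 2*(q.imI*q.imJ - q.re*q.imK), 2*(q.imI*q.imK + q.re*q.imJ);
       2*(q.imI*q.imJ + q.re*q.imK), q.re^2 - q.imI^2 + q.imJ^2 - q.imK^2, 2*(q.imJ*q.imK - q.re*q.imI);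
       2*(q.imI*q.imK - q.re*q.imJ), 2*(q.imJ*q.imK + q.re*q.imI), q.re^2 - q.imI^2 - q.imJ^2 + q.imK^2] := by
  ext i j
  fin_cases i <;> fin_cases j <;>
    simp [Phi, imPart, Quaternion.re_mul, Quaternion.imI_mul, Quaternion.imJ_mul, Quaternion.imK_mul] <;>
    simp [toQuat] <;> ring


lemma mdot_expand (A B : Mat3) : mdot A B = (1/2) *
    (A 0 0 * B 0 0 + A 0 1 * B 0 1 + A 0 2 * B 0 2 +
     A 1 0 * B 1 0 + A 1 1 * B 1 1 + A 1 2 * B 1 2 +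
     A 2 0 * B 2 0 + A 2 1 * B 2 1 + A 2 2 * B 2 2) := by
  simp [mdot, Matrix.trace_fin_three, Matrix.mul_apply, Fin.sum_univ_three]
  ring

lemma fMat_add (A B : Mat3) : fMat (A + B) = fMat A + fMat B := by
  ext i j; fin_cases i <;> fin_cases j <;> simp [fMat] <;> ring

lemma fMat_smul (c : ℝ) (A : Mat3) : fMat (c • A) = c • fMat A := by
  ext i j; fin_cases i <;> fin_cases j <;> simp [fMat] <;> ring

/-- `φ` as a linear equivalence. -/
noncomputable def phiEquiv : Mat3 ≃ₗ[ℝ] S40 where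
  toFun J := ⟨fMat J, fMat_mem J⟩
  invFun M := gMat M.1
  left_inv J := gMat_fMat J
  right_inv := by
    rintro ⟨M, hsym, htr⟩
    exact Subtype.ext (fMat_gMat M hsym htr)
  map_add' A B := Subtype.ext (fMat_add A B)
  map_smul' c A := Subtype.ext (fMat_smul c A)

theorem exists_linear_iso_to_Qtensors :
    ∃ φ : Mat3 ≃ₗ[ℝ] S40,
      (∀ (J : Mat3) (q : ℍ[ℝ]), ‖q‖ = 1 →
        (1 / 2) * mdot J (Phi q) = qv q ⬝ᵥ ((φ J : Matrix (Fin 4) (Fin 4) ℝ) *ᵥ qv q)) ∧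
      (∀ q : ℍ[ℝ], ‖q‖ = 1 →
        (φ (Phi q) : Matrix (Fin 4) (Fin 4) ℝ) = vecMulVec (qv q) (qv q) - (4 : ℝ)⁻¹ • 1) ∧
      (∀ J : Mat3, J.IsDiag ↔ (φ J : Matrix (Fin 4) (Fin 4) ℝ).IsDiag) := by
  have key : ∀ J : Mat3, ((phiEquiv J : S40) : Matrix (Fin 4) (Fin 4) ℝ) = fMat J :=
    fun J => rfl
  refine ⟨phiEquiv, ?_, ?_, ?_⟩
  · intro J q _
    rw [key, mdot_expand, Phi_eq]
    simp [dotProduct, Matrix.mulVec, Fin.sum_univ_four, qv, fMat]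
    ring
  · intro q hq
    have h : q.re^2 + q.imI^2 + q.imJ^2 + q.imK^2 = 1 := by
      have h2 := Quaternion.normSq_eq_norm_mul_self q
      rw [hq, mul_one, Quaternion.normSq_def'] at h2
      exact h2
    rw [key]
    ext i j
    fin_cases i <;> fin_cases j <;>
      simp [fMat, Phi_eq, vecMulVec, qv, Matrix.one_apply] <;>
      (first
        | ring1
        | linarith [h])
  · intro J
    rw [key]
    constructor
    · intro hd
      have e01 : J 0 1 = 0 := hd (by decide)
      have e02 : J 0 2 = 0 := hd (by decide)
      have e10 : J 1 0 = 0 := hd (by decide)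
      have e12 : J 1 2 = 0 := hd (by decide)
      have e20 : J 2 0 = 0 := hd (by decide)
      have e21 : J 2 1 = 0 := hd (by decide)
      intro i j hij
      fin_cases i <;> fin_cases j <;>
        first
          | exact absurd rfl hij
          | (simp [fMat, e01, e02, e10, e12, e20, e21];
             try simp [Matrix.vecHead, Matrix.vecTail])
    · intro hd
      have h1 := hd (show (0:Fin 4) ≠ 1 by decide)
      have h2 := hd (show (0:Fin 4) ≠ 2 by decide)
      have h3 := hd (show (0:Fin 4) ≠ 3 by decide)
      have h4 := hd (show (1:Fin 4) ≠ 2 by decide)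
      have h5 := hd (show (1:Fin 4) ≠ 3 by decide)
      have h6 := hd (show (2:Fin 4) ≠ 3 by decide)
      simp [fMat] at h1 h2 h3 h4 h5 h6
      have j01 : J 0 1 = 0 := by linarith
      have j02 : J 0 2 = 0 := by linarith
      have j10 : J 1 0 = 0 := by linarith
      have j12 : J 1 2 = 0 := by linarith
      have j20 : J 2 0 = 0 := by linarith
      have j21 : J 2 1 = 0 := by linarith
      intro i j hij
      fin_cases i <;> fin_cases j <;>
        first
          | exact absurd rfl hij
          | simpa using j01
          | simpa using j02
          | simpa using j10
          | simpa using j12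
          | simpa using j20
          | simpa using j21
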